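/- Let X be a closed subset of ℝ^n, let Σ ⊆ ℝP^{n−1} be the closure of the set of all directions [x−y] of secants of X (x, y ∈ X, x ≠ y), and let π_L : ℝ^n → ℝ^{n−s−1} be a linear projection with center an s-dimensional projective subspace L contained in the hyperplane at infinity. Then π_L restricted to X is a bi-Lipschitz embedding if and only if L ∩ Σ = ∅. -/

import Mathlib

open Metric Set Filter

noncomputable section

abbrev E (n : ℕ) := EuclideanSpace ℝ (Fin n)

/-- Semialgebraic subsets of ℝⁿ: the boolean algebra generated by polynomial
equalities and inequalities. -/
inductive IsSemialgebraic (n : ℕ) : Set (E n) → Prop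
  | zero (p : MvPolynomial (Fin n) ℝ) :
      IsSemialgebraic n {x | MvPolynomial.eval (fun i => x i) p = 0}
  | pos (p : MvPolynomial (Fin n) ℝ) :
      IsSemialgebraic n {x | 0 < MvPolynomial.eval (fun i => x i) p}
  | union {s t : Set (E n)} : IsSemialgebraic n s → IsSemialgebraic n t →
      IsSemialgebraic n (s ∪ t)
  | inter {s t : Set (E n)} : IsSemialgebraic n s → IsSemialgebraic n t →
      IsSemialgebraic n (s ∩ t)
  | compl {s : Set (E n)} : IsSemialgebraic n s → IsSemialgebraic n sᶜ

/-- A map is semialgebraic on `s` if its graph over `s` is semialgebraic. -/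
def IsSemialgebraicOn {m n : ℕ} (f : E m → E n) (s : Set (E m)) : Prop :=
  IsSemialgebraic (m + n)
    {z : E (m + n) | (WithLp.toLp 2 (fun i : Fin m => z (Fin.castAdd n i)) : E m) ∈ s ∧
      ∀ j : Fin n, f (WithLp.toLp 2 (fun i : Fin m => z (Fin.castAdd n i))) j = z (Fin.natAdd m j)}

/-- A real-valued function on ℝⁿ is semialgebraic if its graph is semialgebraic. -/
def IsSemialgebraicFun (n : ℕ) (p : E n → ℝ) : Prop :=
  IsSemialgebraic (n + 1)
    {z : E (n + 1) | p (WithLp.toLp 2 (fun i : Fin n => z (Fin.castAdd 1 i))) = z (Fin.natAdd n 0)}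

/-- `f` is bi-Lipschitz on `s` (with respect to the outer metrics). -/
def IsBiLipschitzOn {α β : Type*} [PseudoMetricSpace α] [PseudoMetricSpace β]
    (f : α → β) (s : Set α) : Prop :=
  ∃ C : ℝ, 1 ≤ C ∧ ∀ x ∈ s, ∀ y ∈ s,
    dist x y ≤ C * dist (f x) (f y) ∧ dist (f x) (f y) ≤ C * dist x y

/-- A bi-Lipschitz embedding: bi-Lipschitz onto its image, which is closed. -/
def IsBiLipschitzEmbedding {m n : ℕ} (f : E m → E n) (s : Set (E m)) : Prop :=
  IsBiLipschitzOn f s ∧ IsClosed (f '' s)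

/-- A triangular bi-Lipschitz map: `(x₁,…,xₙ) ↦ (x₁,…,x_{n-1}, xₙ + p(x₁,…,x_{n-1}))`
with `p` Lipschitz (i.e. `p` depends only on the first `n-1` coordinates). -/
def IsTriangular (n : ℕ) (F : E n → E n) : Prop :=
  ∃ p : E n → ℝ, (∃ K : NNReal, LipschitzWith K p) ∧
    (∀ x y : E n, (∀ i : Fin n, (i : ℕ) + 1 < n → x i = y i) → p x = p y) ∧
    ∀ (x : E n) (i : Fin n), F x i = x i + (if (i : ℕ) + 1 = n then p x else 0)

/-- Tame bi-Lipschitz homeomorphisms of ℝⁿ: compositions of triangular maps and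
linear maps of determinant one. -/
inductive IsTame (n : ℕ) : (E n → E n) → Prop
  | triangular {F : E n → E n} : IsTriangular n F → IsTame n F
  | linear (A : E n →ₗ[ℝ] E n) (h : LinearMap.det A = 1) : IsTame n (A : E n → E n)
  | comp {F G : E n → E n} : IsTame n F → IsTame n G → IsTame n (F ∘ G)

/-- Triangular maps whose shift function is moreover semialgebraic. -/
def IsTriangularSA (n : ℕ) (F : E n → E n) : Prop :=
  IsTriangular n F ∧ ∃ p : E n → ℝ, IsSemialgebraicFun n p ∧ (∃ K : NNReal, LipschitzWith K p) ∧
    (∀ x y : E n, (∀ i : Fin n, (i : ℕ) + 1 < n → x i = y i) → p x = p y) ∧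
    ∀ (x : E n) (i : Fin n), F x i = x i + (if (i : ℕ) + 1 = n then p x else 0)

/-- Tame semialgebraic bi-Lipschitz homeomorphisms: compositions of semialgebraic
triangular maps and linear maps of determinant one. -/
inductive IsTameSA (n : ℕ) : (E n → E n) → Prop
  | triangular {F : E n → E n} : IsTriangularSA n F → IsTameSA n F
  | linear (A : E n →ₗ[ℝ] E n) (h : LinearMap.det A = 1) : IsTameSA n (A : E n → E n)
  | comp {F G : E n → E n} : IsTameSA n F → IsTameSA n G → IsTameSA n (F ∘ G)

/-- The projection of ℝⁿ onto the first `l` coordinates, viewed as ℝˡ × {0} ⊆ ℝⁿ. -/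
def projE (n l : ℕ) : E n → E n :=
  fun x => WithLp.toLp 2 (fun i : Fin n => if (i : ℕ) < l then x i else 0 : Fin n → ℝ)
/-- The closure of the set of (normalized) directions of secants of `X`. -/
def secantDirections (n : ℕ) (X : Set (E n)) : Set (E n) :=
  closure {d : E n | ∃ x ∈ X, ∃ y ∈ X, x ≠ y ∧ d = ‖x - y‖⁻¹ • (x - y)}

/-- A linear projection with center an `s`-dimensional projective subspace `L` at
infinity (i.e. with `(s+1)`-dimensional kernel) restricts to a bi-Lipschitz embedding
of the closed set `X` iff `L` is disjoint from the closure `Σ` of secant directions. -/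
theorem stmt_7 (n s : ℕ) (hs : s + 1 < n) (X : Set (E n)) (hX : IsClosed X)
    (π : E n →ₗ[ℝ] E (n - s - 1)) (hsurj : Function.Surjective π)
    (hker : Module.finrank ℝ (LinearMap.ker π) = s + 1) :
    IsBiLipschitzEmbedding (π : E n → E (n - s - 1)) X ↔
      ∀ d ∈ secantDirections n X, d ∉ LinearMap.ker π := by
  classical
  set S := {d : E n | ∃ x ∈ X, ∃ y ∈ X, x ≠ y ∧ d = ‖x - y‖⁻¹ • (x - y)} with hSdef
  have hSsec : S ⊆ secantDirections n X := subset_closure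
  have hSsphere : S ⊆ Metric.sphere (0 : E n) 1 := by
    rintro d ⟨x, hx, y, hy, hxy, rfl⟩
    have hne : x - y ≠ 0 := sub_ne_zero.mpr hxy
    simp [mem_sphere_iff_norm, norm_smul, inv_mul_cancel₀ (norm_ne_zero_iff.mpr hne)]
  have hSigSph : secantDirections n X ⊆ Metric.sphere (0 : E n) 1 :=
    closure_minimal hSsphere isClosed_sphere
  have hπcont : Continuous π := π.continuous_of_finiteDimensional
  constructor
  · rintro ⟨⟨C, hC1, hC⟩, -⟩ d hd hdk
    have hT : secantDirections n X ⊆ {e : E n | ‖e‖ ≤ C * ‖π e‖} := by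
      apply closure_minimal _ (isClosed_le (continuous_norm) (by fun_prop))
      rintro e ⟨x, hx, y, hy, hxy, rfl⟩
      have hne : x - y ≠ 0 := sub_ne_zero.mpr hxy
      have h1 := (hC x hx y hy).1
      rw [dist_eq_norm, dist_eq_norm, ← map_sub] at h1
      have hinv : (0:ℝ) ≤ ‖x - y‖⁻¹ := inv_nonneg.mpr (norm_nonneg _)
      have := mul_le_mul_of_nonneg_left h1 hinv
      simp only [mem_setOf_eq, map_smul, norm_smul, norm_inv, norm_norm]
      calc ‖x - y‖⁻¹ * ‖x - y‖ ≤ ‖x - y‖⁻¹ * (C * ‖π (x - y)‖) := this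
        _ = C * (‖x - y‖⁻¹ * ‖π (x - y)‖) := by ring
    have h1 : ‖d‖ = 1 := by simpa using hSigSph hd
    have h2 : π d = 0 := hdk
    have h3 := hT hd
    simp only [mem_setOf_eq, h1, h2, norm_zero, mul_zero] at h3
    linarith
  · intro h
    -- bound above via operator norm
    set π' : E n →L[ℝ] E (n - s - 1) := LinearMap.toContinuousLinearMap π with hπ'
    obtain ⟨c, hc0, hc⟩ : ∃ c : ℝ, 0 < c ∧ ∀ d ∈ secantDirections n X, c ≤ ‖π d‖ := by
      rcases eq_empty_or_nonempty (secantDirections n X) with hSig | hSig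
      · exact ⟨1, one_pos, fun d hd => absurd hd (by simp [hSig])⟩
      · have hcomp : IsCompact (secantDirections n X) :=
          (isCompact_sphere (0 : E n) 1).of_isClosed_subset isClosed_closure hSigSph
        obtain ⟨d₀, hd₀, hmin⟩ := hcomp.exists_isMinOn hSig (by fun_prop : Continuous fun d => ‖π d‖).continuousOn
        refine ⟨‖π d₀‖, ?_, fun d hd => hmin hd⟩
        have : π d₀ ≠ 0 := h d₀ hd₀
        simpa [norm_pos_iff] using this
    set C : ℝ := max (max c⁻¹ ‖π'‖) 1 with hCdef
    have hC1 : (1:ℝ) ≤ C := le_max_right _ _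
    have hClow : c⁻¹ ≤ C := le_trans (le_max_left _ _) (le_max_left _ _)
    have hCop : ‖π'‖ ≤ C := le_trans (le_max_right _ _) (le_max_left _ _)
    have key : ∀ x ∈ X, ∀ y ∈ X,
        dist x y ≤ C * dist (π x) (π y) ∧ dist (π x) (π y) ≤ C * dist x y := by
      intro x hx y hy
      constructor
      · rcases eq_or_ne x y with rfl | hxy
        · simp
        · have hne : x - y ≠ 0 := sub_ne_zero.mpr hxy
          have hd : (‖x - y‖⁻¹ • (x - y)) ∈ S := ⟨x, hx, y, hy, hxy, rfl⟩
          have h1 : c ≤ ‖π (‖x - y‖⁻¹ • (x - y))‖ := hc _ (hSsec hd)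
          rw [map_smul, norm_smul, norm_inv, norm_norm] at h1
          have hn : (0:ℝ) < ‖x - y‖ := norm_pos_iff.mpr hne
          rw [dist_eq_norm, dist_eq_norm, ← map_sub]
          have h2 : c * ‖x - y‖ ≤ ‖π (x - y)‖ := by
            have h4 := mul_le_mul_of_nonneg_right h1 hn.le
            have h5 : ‖x - y‖⁻¹ * ‖π (x - y)‖ * ‖x - y‖ = ‖π (x - y)‖ := by
              field_simp
            rw [h5] at h4
            exact h4
          have h3 : ‖x - y‖ ≤ c⁻¹ * ‖π (x - y)‖ := by
            rw [le_inv_mul_iff₀ hc0]; linarith [h2]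
          calc ‖x - y‖ ≤ c⁻¹ * ‖π (x - y)‖ := h3
            _ ≤ C * ‖π (x - y)‖ := by
                exact mul_le_mul_of_nonneg_right hClow (norm_nonneg _)
      · rw [dist_eq_norm, dist_eq_norm, ← map_sub]
        calc ‖π (x - y)‖ = ‖π' (x - y)‖ := rfl
          _ ≤ ‖π'‖ * ‖x - y‖ := π'.le_opNorm _
          _ ≤ C * ‖x - y‖ := mul_le_mul_of_nonneg_right hCop (norm_nonneg _)
    refine ⟨⟨C, hC1, key⟩, ?_⟩
    -- closedness of the image
    apply IsSeqClosed.isClosed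
    intro u z hu hz
    choose v hvX hvπ using hu
    have hucauchy : CauchySeq u := hz.cauchySeq
    have hvcauchy : CauchySeq v := by
      rw [Metric.cauchySeq_iff] at hucauchy ⊢
      intro ε hε
      obtain ⟨N, hN⟩ := hucauchy (ε / C) (by positivity)
      refine ⟨N, fun a ha b hb => ?_⟩
      have h1 := (key (v a) (hvX a) (v b) (hvX b)).1
      rw [hvπ a, hvπ b] at h1
      calc dist (v a) (v b) ≤ C * dist (u a) (u b) := h1
        _ < C * (ε / C) := by
            exact mul_lt_mul_of_pos_left (hN a ha b hb) (by linarith)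
        _ = ε := by field_simp
    obtain ⟨x, hxlim⟩ := cauchySeq_tendsto_of_complete hvcauchy
    have hxX : x ∈ X := hX.mem_of_tendsto hxlim (Eventually.of_forall hvX)
    have hπx : Tendsto (fun k => π (v k)) atTop (nhds (π x)) := (hπcont.tendsto x).comp hxlim
    have : Tendsto u atTop (nhds (π x)) := by
      simpa only [hvπ] using hπx
    exact ⟨x, hxX, tendsto_nhds_unique this hz⟩
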